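/- Let η, η*, : ℝ → ℝ be increasing bijections with η and η⁻¹ Lipschitz, likewise η* and η*⁻¹, and let 1 < q. Then for all x ≠ x': |η(x)-η(x')-η*(x)+η*(x')| · |x-x'|^{q-1} ≤ max{Lip(η⁻¹), Lip(η*⁻¹)}^{q-1} · |(1/q)|η(x)-η(x')|^q - (1/q)|η*(x)-η*(x')|^q|. -/

import Mathlib

open Real

lemma rpow_slope_lower (q m a b : ℝ) (hq : 1 < q) (hm : 0 < m) (hma : m ≤ a)
    (hmb : m ≤ b) : m ^ (q - 1) * |a - b| ≤ |a ^ q / q - b ^ q / q| := by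
  wlog hba : b ≤ a generalizing a b
  · rw [abs_sub_comm a b, abs_sub_comm (a ^ q / q)]
    exact this b a hmb hma (le_of_not_ge hba)
  have ha : 0 < a := hm.trans_le hma
  have hb : 0 < b := hm.trans_le hmb
  rcases eq_or_lt_of_le hba with h | h
  · simp [h]
  obtain ⟨c, hc, hslope⟩ := exists_hasDerivAt_eq_slope (fun x => x ^ q)
      (fun x => q * x ^ (q - 1)) h
      (fun x _ => (Real.continuousAt_rpow_const x q
        (Or.inr (by linarith))).continuousWithinAt)
      (fun x _ => Real.hasDerivAt_rpow_const (Or.inr hq.le))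
  have hcm : m ≤ c := hmb.trans hc.1.le
  have hab : (0:ℝ) < a - b := sub_pos.2 h
  have hq0 : (0:ℝ) < q := by linarith
  have heq : a ^ q - b ^ q = q * c ^ (q - 1) * (a - b) := by
    field_simp at hslope
    linarith [hslope]
  have hpow : b ^ q ≤ a ^ q := Real.rpow_le_rpow hb.le hba hq0.le
  have hcp : m ^ (q - 1) ≤ c ^ (q - 1) := Real.rpow_le_rpow hm.le hcm (by linarith)
  rw [abs_of_pos hab, abs_of_nonneg (by rw [sub_nonneg]; gcongr)]
  have : m ^ (q - 1) * (a - b) ≤ c ^ (q - 1) * (a - b) :=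
    mul_le_mul_of_nonneg_right hcp hab.le
  calc m ^ (q - 1) * (a - b) ≤ c ^ (q - 1) * (a - b) := this
    _ = (a ^ q - b ^ q) / q := by rw [heq]; field_simp
    _ = a ^ q / q - b ^ q / q := by ring

/-- For increasing bi-Lipschitz bijections `η, η*` and `q > 1`, the difference of increments
weighted by `|x-x'|^{q-1}` is bounded by the difference of the `q`-th power kernels, with
constant `max{Lip(η⁻¹), Lip(η*⁻¹)}^{q-1}`. Here `AntilipschitzWith C η` expresses that
`η⁻¹` is `C`-Lipschitz. -/
theorem stmt_10 (η ηs : ℝ → ℝ) (q : ℝ) (hq : 1 < q)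
    (hmη : Monotone η) (hmηs : Monotone ηs)
    (hbη : Function.Bijective η) (hbηs : Function.Bijective ηs)
    (Lη Lηs Cη Cηs : NNReal)
    (hLη : LipschitzWith Lη η) (hLηs : LipschitzWith Lηs ηs)
    (hCη : AntilipschitzWith Cη η) (hCηs : AntilipschitzWith Cηs ηs) :
    ∀ x x' : ℝ, x ≠ x' →
      |η x - η x' - ηs x + ηs x'| * |x - x'| ^ (q - 1)
        ≤ (max (Cη : ℝ) (Cηs : ℝ)) ^ (q - 1) *
            |(1 / q) * |η x - η x'| ^ q - (1 / q) * |ηs x - ηs x'| ^ q| := by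
  have hsη := hmη.strictMono_of_injective hbη.injective
  have hsηs := hmηs.strictMono_of_injective hbηs.injective
  set C : ℝ := max (Cη : ℝ) (Cηs : ℝ) with hC
  have key : ∀ x x' : ℝ, x' < x →
      |η x - η x' - ηs x + ηs x'| * |x - x'| ^ (q - 1)
        ≤ C ^ (q - 1) *
            |(1 / q) * |η x - η x'| ^ q - (1 / q) * |ηs x - ηs x'| ^ q| := by
    intro x x' hlt
    have htpos : (0:ℝ) < x - x' := sub_pos.2 hlt
    have ha : (0:ℝ) < η x - η x' := sub_pos.2 (hsη hlt)
    have hb : (0:ℝ) < ηs x - ηs x' := sub_pos.2 (hsηs hlt)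
    have hta : x - x' ≤ (Cη : ℝ) * (η x - η x') := by
      have h := hCη.le_mul_dist x x'
      rw [Real.dist_eq, Real.dist_eq, abs_of_pos htpos, abs_of_pos ha] at h
      exact h
    have htb : x - x' ≤ (Cηs : ℝ) * (ηs x - ηs x') := by
      have h := hCηs.le_mul_dist x x'
      rw [Real.dist_eq, Real.dist_eq, abs_of_pos htpos, abs_of_pos hb] at h
      exact h
    have hCηpos : (0:ℝ) < (Cη : ℝ) := by nlinarith
    have hCpos : (0:ℝ) < C := lt_of_lt_of_le hCηpos (le_max_left _ _)
    have hma : (x - x') / C ≤ η x - η x' := by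
      rw [div_le_iff₀ hCpos]
      calc x - x' ≤ (Cη : ℝ) * (η x - η x') := hta
        _ ≤ (η x - η x') * C :=
          by rw [mul_comm]; exact mul_le_mul_of_nonneg_left (le_max_left _ _) ha.le
    have hmb : (x - x') / C ≤ ηs x - ηs x' := by
      rw [div_le_iff₀ hCpos]
      calc x - x' ≤ (Cηs : ℝ) * (ηs x - ηs x') := htb
        _ ≤ (ηs x - ηs x') * C :=
          by rw [mul_comm]; exact mul_le_mul_of_nonneg_left (le_max_right _ _) hb.le
    have hm : (0:ℝ) < (x - x') / C := div_pos htpos hCpos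
    have hkey := rpow_slope_lower q ((x - x') / C) (η x - η x') (ηs x - ηs x')
      hq hm hma hmb
    rw [Real.div_rpow htpos.le hCpos.le] at hkey
    have hCr : (0:ℝ) < C ^ (q - 1) := Real.rpow_pos_of_pos hCpos _
    rw [abs_of_pos ha, abs_of_pos hb, abs_of_pos htpos]
    have habs : |η x - η x' - ηs x + ηs x'| = |(η x - η x') - (ηs x - ηs x')| := by
      ring_nf
    rw [habs]
    have := mul_le_mul_of_nonneg_left hkey hCr.le
    calc |(η x - η x') - (ηs x - ηs x')| * (x - x') ^ (q - 1)
        = C ^ (q - 1) * ((x - x') ^ (q - 1) / C ^ (q - 1)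
            * |(η x - η x') - (ηs x - ηs x')|) := by
          field_simp
      _ ≤ C ^ (q - 1)
            * |(η x - η x') ^ q / q - (ηs x - ηs x') ^ q / q| := this
      _ = C ^ (q - 1) * |1 / q * (η x - η x') ^ q - 1 / q * (ηs x - ηs x') ^ q| := by
          ring_nf
  intro x x' hne
  rcases hne.lt_or_gt with h | h
  · have hk := key x' x h
    have e1 : η x - η x' - ηs x + ηs x' = -(η x' - η x - ηs x' + ηs x) := by ring
    rw [e1, abs_neg, abs_sub_comm x x', abs_sub_comm (η x) (η x'),
      abs_sub_comm (ηs x) (ηs x')]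
    exact hk
  · exact key x x' h
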